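/- Suppose lim_{j→∞} p_j = 1. Then there exist a real number r > 0 and an integer j_0 ≥ 1 (one may take r = √2 − 1 and any j_0 with p_j ≥ 2(√2 − 1) for all j ≥ j_0) such that for every j ≥ j_0, every λ ∈ ℂ with |ι_λ(j)| < r is an eigenvalue of the transition operator S acting on c_0. In particular, the point spectrum of S on c_0 has nonempty interior. -/

import Mathlib

open Filter Finset
open scoped ENNReal Topology ZeroAtInfty

noncomputable section

set_option linter.unusedSectionVars false
set_option linter.unusedVariables false
set_option linter.unnecessarySimpa false

namespace AMFC

/-- `q d j = d 0 * d 1 * ... * d j`. -/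
def q (d : ℕ → ℕ) (j : ℕ) : ℕ := ∏ i ∈ Finset.range (j + 1), d i

/-- For `j ≥ 1`, `digit d n j = ⌊n / q_{j-1}⌋ mod d_j` is the `j`-th digit of `n`
in the Cantor system of numeration. -/
def digit (d : ℕ → ℕ) (n j : ℕ) : ℕ := (n / q d (j - 1)) % d j

/-- The counter `ζ_n = min { j ≥ 1 : a_j(n) ≠ d_j - 1 }`. -/
def zeta (d : ℕ → ℕ) (n : ℕ) : ℕ := sInf {j | 1 ≤ j ∧ digit d n j ≠ d j - 1}

open scoped Classical in
/-- The transition probabilities of the stochastic adding machine. -/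
def s (d : ℕ → ℕ) (p : ℕ → ℝ) (n m : ℕ) : ℝ :=
  if m = n + 1 then ∏ j ∈ Finset.Icc 1 (zeta d n), p j
  else if m = n then 1 - p 1
  else if h : ∃ r, 1 ≤ r ∧ r + 1 ≤ zeta d n ∧
      n = m + ∑ j ∈ Finset.Icc 1 r, (d j - 1) * q d (j - 1)
    then (1 - p (h.choose + 1)) * ∏ j ∈ Finset.Icc 1 h.choose, p j
  else 0

/-- `f j (z) = ((z - (1 - p j)) / p j) ^ (d j)`. -/
def f (d : ℕ → ℕ) (p : ℕ → ℝ) (j : ℕ) (z : ℂ) : ℂ :=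
  ((z - (1 - (p j : ℂ))) / (p j : ℂ)) ^ d j

/-- `ftil j = f j ∘ ... ∘ f 1`, with `ftil 0 = id`. -/
def ftil (d : ℕ → ℕ) (p : ℕ → ℝ) : ℕ → ℂ → ℂ
  | 0 => id
  | j + 1 => f d p (j + 1) ∘ ftil d p j

/-- The fibered filled Julia set `E = {z : limsup_j |ftil j z| < ∞}`. -/
def E (d : ℕ → ℕ) (p : ℕ → ℝ) : Set ℂ :=
  {z | Filter.limsup (fun j => (‖ftil d p j z‖₊ : ℝ≥0∞)) Filter.atTop < ⊤}

/-- `ι_λ(r) = (ftil (r-1) λ - (1 - p r)) / p r` for `r ≥ 1`. -/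
def iota (d : ℕ → ℕ) (p : ℕ → ℝ) (lam : ℂ) (r : ℕ) : ℂ :=
  (ftil d p (r - 1) lam - (1 - (p r : ℂ))) / (p r : ℂ)

/-- `v_λ(n) = ∏_{r ≥ 1} ι_λ(r) ^ a_r(n)`, a finite product. -/
def vlam (d : ℕ → ℕ) (p : ℕ → ℝ) (lam : ℂ) (n : ℕ) : ℂ :=
  ∏ᶠ r : ℕ, iota d p lam (r + 1) ^ digit d n (r + 1)

/-- The point spectrum of a continuous linear operator. -/
def pointSpectrum {M : Type*} [NormedAddCommGroup M] [NormedSpace ℂ M]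
    (T : M →L[ℂ] M) : Set ℂ :=
  {lam | ∃ v, v ≠ 0 ∧ T v = lam • v}

/-- The residual spectrum: `T - λI` is injective but its range is not dense. -/
def residualSpectrum {M : Type*} [NormedAddCommGroup M] [NormedSpace ℂ M]
    (T : M →L[ℂ] M) : Set ℂ :=
  {lam | Function.Injective ⇑(T - lam • (1 : M →L[ℂ] M)) ∧
    ¬ DenseRange ⇑(T - lam • (1 : M →L[ℂ] M))}

/-- The continuous spectrum: `T - λI` is injective with dense range, but not surjective. -/
def continuousSpectrum {M : Type*} [NormedAddCommGroup M] [NormedSpace ℂ M]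
    (T : M →L[ℂ] M) : Set ℂ :=
  {lam | Function.Injective ⇑(T - lam • (1 : M →L[ℂ] M)) ∧
    DenseRange ⇑(T - lam • (1 : M →L[ℂ] M)) ∧
    Set.range ⇑(T - lam • (1 : M →L[ℂ] M)) ≠ Set.univ}

section basic
variable {d : ℕ → ℕ} (hd0 : d 0 = 1) (hd : ∀ j, 1 ≤ j → 2 ≤ d j)
include hd0 hd

lemma d_pos : ∀ i, 0 < d i := by
  intro i; cases i with
  | zero => omega
  | succ k => have := hd (k+1) (by omega); omega

lemma q_pos (j : ℕ) : 0 < q d j :=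
  Finset.prod_pos (fun i _ => d_pos hd0 hd i)

lemma q_zero : q d 0 = 1 := by simp [q, hd0]

lemma q_succ (j : ℕ) : q d (j + 1) = q d j * d (j + 1) := by
  simp [q, Finset.prod_range_succ]

lemma q_lt_succ (j : ℕ) : q d j < q d (j + 1) := by
  rw [q_succ hd0 hd]
  have h1 := q_pos hd0 hd j
  have h2 := hd (j+1) (by omega)
  nlinarith

lemma q_strictMono : StrictMono (q d) :=
  strictMono_nat_of_lt_succ (q_lt_succ hd0 hd)

lemma lt_q_self (n : ℕ) : n < q d n := by
  induction n with
  | zero => simpa [q_zero hd0 hd] using Nat.zero_lt_one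
  | succ k ih => have := q_lt_succ hd0 hd k; omega

lemma q_dvd_q {i j : ℕ} (h : i ≤ j) : q d i ∣ q d j := by
  apply Finset.prod_dvd_prod_of_subset
  intro x hx; simp only [Finset.mem_range] at *; omega

lemma sum_geom (r : ℕ) :
    ∑ j ∈ Finset.Icc 1 r, (d j - 1) * q d (j - 1) = q d r - 1 := by
  induction r with
  | zero => simp [q_zero hd0 hd]
  | succ k ih =>
      rw [Finset.sum_Icc_succ_top (by omega), ih]
      have h1 := q_pos hd0 hd k
      have h2 := hd (k+1) (by omega)
      have h3 := q_succ hd0 hd k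
      simp only [Nat.add_sub_cancel]
      have h5 : (d (k+1) - 1) * q d k = q d k * d (k+1) - q d k := by
        rw [Nat.sub_mul, one_mul, mul_comm]
      have h6 : q d k ≤ q d k * d (k+1) := Nat.le_mul_of_pos_right _ (by omega)
      omega

lemma digit_lt (n j : ℕ) (hj : 1 ≤ j) : digit d n j < d j :=
  Nat.mod_lt _ (d_pos hd0 hd j)

lemma digit_eq_zero_of_lt {n j : ℕ} (hj : 1 ≤ j) (h : n < q d (j - 1)) :
    digit d n j = 0 := by
  simp [digit, Nat.div_eq_of_lt h]

/-- the set defining `zeta` is nonempty -/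
lemma zeta_set_nonempty (n : ℕ) : {j | 1 ≤ j ∧ digit d n j ≠ d j - 1}.Nonempty := by
  refine ⟨n + 1, by omega, ?_⟩
  rw [digit_eq_zero_of_lt hd0 hd (by omega) (by simpa using lt_q_self hd0 hd n)]
  have := hd (n+1) (by omega); omega

lemma zeta_pos (n : ℕ) : 1 ≤ zeta d n :=
  (Nat.sInf_mem (zeta_set_nonempty hd0 hd n)).1

lemma digit_zeta (n : ℕ) : digit d n (zeta d n) ≠ d (zeta d n) - 1 :=
  (Nat.sInf_mem (zeta_set_nonempty hd0 hd n)).2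

lemma digit_of_lt_zeta {n j : ℕ} (h1 : 1 ≤ j) (h2 : j < zeta d n) :
    digit d n j = d j - 1 := by
  by_contra h
  have hm : j ∈ {j | 1 ≤ j ∧ digit d n j ≠ d j - 1} := ⟨h1, h⟩
  have := Nat.sInf_le hm
  unfold zeta at h2; omega

/-- key mod identity -/
lemma mod_mul (n a b : ℕ) : n % (a * b) = n % a + a * (n / a % b) := by
  conv_lhs => rw [← Nat.div_add_mod (n % (a*b)) a]
  rw [Nat.mod_mod_of_dvd n ⟨b, rfl⟩, Nat.mod_mul_right_div_self]
  ring

/-- all digits `1..j` maxed out implies `n % q j = q j - 1` -/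
lemma mod_maxed {n : ℕ} {j : ℕ} (h : ∀ i, 1 ≤ i → i ≤ j → digit d n i = d i - 1) :
    n % q d j = q d j - 1 := by
  induction j with
  | zero => simp [q_zero hd0 hd, Nat.mod_one]
  | succ k ih =>
      have hk : n % q d k = q d k - 1 := ih (fun i h1 h2 => h i h1 (by omega))
      have hdig : n / q d k % d (k+1) = d (k+1) - 1 := by
        have := h (k+1) (by omega) le_rfl
        simpa [digit] using this
      rw [q_succ hd0 hd, mod_mul hd0 hd n (q d k) (d (k+1)), hk, hdig]
      have h1 := q_pos hd0 hd k
      have h2 := hd (k+1) (by omega)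
      have h5 : q d k * (d (k+1) - 1) = q d k * d (k+1) - q d k := by
        rw [Nat.mul_sub, mul_one]
      have h6 : q d k ≤ q d k * d (k+1) := Nat.le_mul_of_pos_right _ (by omega)
      omega

/-- digits of `q r * t` vanish in positions `1..r` -/
lemma digit_mul_low {r t i : ℕ} (h1 : 1 ≤ i) (h2 : i ≤ r) :
    digit d (q d r * t) i = 0 := by
  obtain ⟨c, hc⟩ := q_dvd_q hd0 hd (show i ≤ r from h2)
  have hq : q d i = q d (i-1) * d i := by
    have h3 := q_succ hd0 hd (i-1)
    have h4 : i - 1 + 1 = i := by omega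
    rwa [h4] at h3
  rw [digit, hc, hq]
  rw [show q d (i-1) * d i * c * t = q d (i-1) * (d i * (c * t)) by ring,
    Nat.mul_div_cancel_left _ (q_pos hd0 hd (i-1)), Nat.mul_mod_right]

/-- digits of `q r * t` agree with digits of `n` above `r`, when `t = n / q r` -/
lemma digit_mul_high {r i : ℕ} (n : ℕ) (h2 : r < i) :
    digit d (q d r * (n / q d r)) i = digit d n i := by
  obtain ⟨c, hc⟩ := q_dvd_q hd0 hd (show r ≤ i - 1 by omega)
  rw [digit, digit, hc, Nat.mul_div_mul_left _ _ (q_pos hd0 hd r),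
    ← Nat.div_div_eq_div_mul]


-- digits below zeta are maxed, so `n % q d (zeta-1) = q d (zeta-1) - 1`
lemma nmod_zeta (n : ℕ) : n % q d (zeta d n - 1) = q d (zeta d n - 1) - 1 :=
  mod_maxed hd0 hd (fun i h1 h2 => digit_of_lt_zeta hd0 hd h1
    (by have := zeta_pos hd0 hd n; omega))

lemma succ_eq (n : ℕ) :
    n + 1 = q d (zeta d n - 1) * (n / q d (zeta d n - 1) + 1) := by
  have h1 := nmod_zeta hd0 hd n
  have h2 := Nat.div_add_mod n (q d (zeta d n - 1))
  have h3 := q_pos hd0 hd (zeta d n - 1)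
  rw [Nat.mul_add, mul_one]
  omega

lemma digit_succ_low {n i : ℕ} (h1 : 1 ≤ i) (h2 : i < zeta d n) :
    digit d (n + 1) i = 0 := by
  rw [succ_eq hd0 hd n]
  exact digit_mul_low hd0 hd h1 (by omega)

lemma digit_succ_zeta (n : ℕ) :
    digit d (n + 1) (zeta d n) = digit d n (zeta d n) + 1 := by
  set z := zeta d n with hz
  have hz1 := zeta_pos hd0 hd n
  have hdl := digit_lt hd0 hd n z (by simpa [← hz] using zeta_pos hd0 hd n)
  have hdz := digit_zeta hd0 hd n
  simp only [← hz] at hdz hz1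
  have hd2 := hd z hz1
  have hdig : digit d n z ≤ d z - 2 := by omega
  have hdiv : (n + 1) / q d (z - 1) = n / q d (z - 1) + 1 := by
    conv_lhs => rw [succ_eq hd0 hd n, ← hz]
    rw [Nat.mul_div_cancel_left _ (q_pos hd0 hd (z-1))]
  rw [digit, hdiv]
  have e1 : (1:ℕ) % d z = 1 := Nat.mod_eq_of_lt (by omega)
  have e2 : n / q d (z-1) % d z = digit d n z := rfl
  rw [Nat.add_mod, e1, e2, Nat.mod_eq_of_lt (by omega)]

lemma not_dvd_succ (n : ℕ) {i : ℕ} (h : zeta d n < i) :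
    ¬ q d (i - 1) ∣ (n + 1) := by
  set z := zeta d n with hz
  have hz1 := zeta_pos hd0 hd n
  have hqz : q d z = q d (z-1) * d z := by
    have h3 := q_succ hd0 hd (z-1)
    have h4 : z - 1 + 1 = z := by omega
    rwa [h4] at h3
  have hmod : n % q d z = (q d (z-1) - 1) + q d (z-1) * digit d n z := by
    rw [hqz, mod_mul hd0 hd, nmod_zeta hd0 hd]
    rfl
  have hdl := digit_lt hd0 hd n z (by simpa [← hz] using zeta_pos hd0 hd n)
  have hdz := digit_zeta hd0 hd n
  simp only [← hz] at hdz hz1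
  have hd2 := hd z hz1
  have h3 := q_pos hd0 hd (z-1)
  have hlt : n % q d z + 1 < q d z := by
    obtain ⟨e, he⟩ : ∃ e, d z = e + 2 := ⟨d z - 2, by omega⟩
    have h6 : q d (z-1) * digit d n z ≤ q d (z-1) * e :=
      Nat.mul_le_mul_left _ (by omega)
    have h5 : q d (z-1) * (e + 2) = q d (z-1) * e + 2 * q d (z-1) := by ring
    rw [hqz, he] at hmod ⊢
    omega
  intro hdvd
  have hdvd2 : q d z ∣ n + 1 := dvd_trans (q_dvd_q hd0 hd (by omega)) hdvd
  have hq2 : 2 ≤ q d z := by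
    have := q_strictMono hd0 hd (show 0 < z by omega)
    have := q_zero hd0 hd
    omega
  obtain ⟨t, ht⟩ := hdvd2
  have hz0 : (n+1) % q d z = 0 := by rw [ht]; exact Nat.mul_mod_right _ _
  have : (n+1) % q d z = n % q d z + 1 := by
    rw [Nat.add_mod, Nat.mod_eq_of_lt (show 1 < q d z by omega),
      Nat.mod_eq_of_lt (by omega)]
  omega

lemma digit_succ_high {n i : ℕ} (h : zeta d n < i) :
    digit d (n + 1) i = digit d n i := by
  rw [digit, digit, Nat.succ_div, if_neg (not_dvd_succ hd0 hd n h), Nat.add_zero]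

-- `mr` facts
lemma sub_eq (n r : ℕ) (h1 : 1 ≤ r) (h2 : r + 1 ≤ zeta d n) :
    n - (q d r - 1) = q d r * (n / q d r) := by
  have hmod : n % q d r = q d r - 1 :=
    mod_maxed hd0 hd (fun i hi1 hi2 => digit_of_lt_zeta hd0 hd hi1 (by omega))
  have h3 := Nat.div_add_mod n (q d r)
  have h4 := q_pos hd0 hd r
  omega

lemma digit_sub_low {n r i : ℕ} (h1 : 1 ≤ r) (h2 : r + 1 ≤ zeta d n)
    (hi1 : 1 ≤ i) (hi2 : i ≤ r) : digit d (n - (q d r - 1)) i = 0 := by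
  rw [sub_eq hd0 hd n r h1 h2]
  exact digit_mul_low hd0 hd hi1 hi2

lemma digit_sub_high {n r i : ℕ} (h1 : 1 ≤ r) (h2 : r + 1 ≤ zeta d n)
    (hi : r < i) : digit d (n - (q d r - 1)) i = digit d n i := by
  rw [sub_eq hd0 hd n r h1 h2]
  exact digit_mul_high hd0 hd n hi

lemma digit_eq_zero_high {n m j : ℕ} (hn : n < q d m) (hj : m < j) :
    digit d n j = 0 :=
  digit_eq_zero_of_lt hd0 hd (by omega)
    (lt_of_lt_of_le hn ((q_strictMono hd0 hd).monotone (by omega)))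

lemma exists_top_digit {n m : ℕ} (h : q d m ≤ n) :
    ∃ j, m + 1 ≤ j ∧ digit d n j ≠ 0 := by
  have hex : ∃ k, n < q d k := ⟨n, lt_q_self hd0 hd n⟩
  let K := Nat.find hex
  have hK : n < q d K := Nat.find_spec hex
  have hKpos : m < K := by
    by_contra hc
    have : q d K ≤ q d m := (q_strictMono hd0 hd).monotone (by omega)
    omega
  have hKmin : ¬ n < q d (K - 1) := by
    have : K - 1 < K := by omega
    exact Nat.find_min hex this
  refine ⟨K, by omega, ?_⟩
  have hQ : q d K = q d (K-1) * d K := by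
    have h3 := q_succ hd0 hd (K-1)
    have h4 : K - 1 + 1 = K := by omega
    rwa [show K - 1 + 1 = K by omega] at h3
  have hdiv1 : 1 ≤ n / q d (K-1) := Nat.one_le_div_iff (q_pos hd0 hd _) |>.2 (by omega)
  have hdiv2 : n / q d (K-1) < d K := by
    apply Nat.div_lt_of_lt_mul
    rw [← hQ]
    exact hK
  rw [digit, Nat.mod_eq_of_lt hdiv2]
  omega

end basic

/-! ### Telescoping identity -/

lemma tele_aux (p' ι : ℕ → ℂ) (e : ℕ → ℕ) (he : ∀ j, 1 ≤ j → 1 ≤ e j)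
    (hrec : ∀ r, 1 ≤ r → p' (r+1) * ι (r+1) + (1 - p' (r+1)) = ι r ^ e r) (z : ℕ) :
    ∀ k t, 1 ≤ t → t + k = z →
    (∏ j ∈ Finset.Icc 1 z, p' j) * ι z
      + ∑ r ∈ Finset.Icc t (z-1), (1 - p' (r+1)) * (∏ j ∈ Finset.Icc 1 r, p' j)
          * (∏ j ∈ Finset.Icc (r+1) (z-1), ι j ^ (e j - 1))
    = (∏ j ∈ Finset.Icc 1 t, p' j) * ι t * (∏ j ∈ Finset.Icc t (z-1), ι j ^ (e j - 1)) := by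
  intro k
  induction k with
  | zero =>
      intro t ht htz
      have hzt : t = z := by omega
      subst hzt
      have : Finset.Icc t (t-1) = ∅ := by
        apply Finset.Icc_eq_empty
        omega
      simp [this]
  | succ k ih =>
      intro t ht htz
      have htz1 : t ≤ z - 1 := by omega
      have hsplit : Finset.Icc t (z-1) = insert t (Finset.Icc (t+1) (z-1)) := by
        ext x
        simp only [Finset.mem_Icc, Finset.mem_insert]
        omega
      have hnotmem : t ∉ Finset.Icc (t+1) (z-1) := by
        simp only [Finset.mem_Icc]
        omega
      rw [hsplit, Finset.sum_insert hnotmem, Finset.prod_insert hnotmem]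
      have IH := ih (t+1) (by omega) (by omega)
      have hPt : ∏ j ∈ Finset.Icc 1 (t+1), p' j = (∏ j ∈ Finset.Icc 1 t, p' j) * p' (t+1) :=
        Finset.prod_Icc_succ_top (by omega) _
      have hBsplit : Finset.Icc (t+1) (z-1) = Finset.Icc (t+1) (z-1) := rfl
      have hpow : ι t ^ e t = ι t * ι t ^ (e t - 1) := by
        conv_lhs => rw [show e t = (e t - 1) + 1 by have := he t ht; omega]
        rw [pow_succ]
        ring
      calc (∏ j ∈ Finset.Icc 1 z, p' j) * ι z
          + ((1 - p' (t+1)) * (∏ j ∈ Finset.Icc 1 t, p' j)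
              * (∏ j ∈ Finset.Icc (t+1) (z-1), ι j ^ (e j - 1))
            + ∑ r ∈ Finset.Icc (t+1) (z-1), (1 - p' (r+1)) * (∏ j ∈ Finset.Icc 1 r, p' j)
              * (∏ j ∈ Finset.Icc (r+1) (z-1), ι j ^ (e j - 1)))
          = ((∏ j ∈ Finset.Icc 1 z, p' j) * ι z
            + ∑ r ∈ Finset.Icc (t+1) (z-1), (1 - p' (r+1)) * (∏ j ∈ Finset.Icc 1 r, p' j)
              * (∏ j ∈ Finset.Icc (r+1) (z-1), ι j ^ (e j - 1)))
            + (1 - p' (t+1)) * (∏ j ∈ Finset.Icc 1 t, p' j)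
              * (∏ j ∈ Finset.Icc (t+1) (z-1), ι j ^ (e j - 1)) := by ring
        _ = (∏ j ∈ Finset.Icc 1 (t+1), p' j) * ι (t+1)
              * (∏ j ∈ Finset.Icc (t+1) (z-1), ι j ^ (e j - 1))
            + (1 - p' (t+1)) * (∏ j ∈ Finset.Icc 1 t, p' j)
              * (∏ j ∈ Finset.Icc (t+1) (z-1), ι j ^ (e j - 1)) := by rw [IH]
        _ = (∏ j ∈ Finset.Icc 1 t, p' j)
              * (p' (t+1) * ι (t+1) + (1 - p' (t+1)))
              * (∏ j ∈ Finset.Icc (t+1) (z-1), ι j ^ (e j - 1)) := by rw [hPt]; ring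
        _ = (∏ j ∈ Finset.Icc 1 t, p' j) * (ι t ^ e t)
              * (∏ j ∈ Finset.Icc (t+1) (z-1), ι j ^ (e j - 1)) := by
              rw [hrec t ht]
        _ = (∏ j ∈ Finset.Icc 1 t, p' j) * ι t
              * (ι t ^ (e t - 1) * ∏ j ∈ Finset.Icc (t+1) (z-1), ι j ^ (e j - 1)) := by
              rw [hpow]; ring

/-! ### vlam decompositions -/

section vdecomp
variable {d : ℕ → ℕ} (hd0 : d 0 = 1) (hd : ∀ j, 1 ≤ j → 2 ≤ d j) (p : ℕ → ℝ) (lam : ℂ)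
include hd0 hd

lemma vlam_eq_prod_Icc {n M : ℕ} (hn : n < q d M) :
    vlam d p lam n = ∏ j ∈ Finset.Icc 1 M, iota d p lam j ^ digit d n j := by
  have hsupp : (Function.mulSupport fun r => iota d p lam (r+1) ^ digit d n (r+1))
      ⊆ ↑(Finset.range M) := by
    intro r hr
    by_contra hmem
    simp only [Finset.coe_range, Set.mem_Iio, not_lt] at hmem
    have hz : digit d n (r+1) = 0 := digit_eq_zero_high hd0 hd hn (by omega)
    apply hr
    show iota d p lam (r+1) ^ digit d n (r+1) = 1
    rw [hz, pow_zero]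
  have hIcc : Finset.Icc 1 M = Finset.Ico 1 (M+1) := by
    ext x; simp only [Finset.mem_Icc, Finset.mem_Ico]; omega
  rw [vlam, finprod_eq_prod_of_mulSupport_subset _ hsupp, hIcc,
    Finset.prod_Ico_eq_prod_range]
  simp only [Nat.add_sub_cancel]
  exact Finset.prod_congr rfl (fun i _ => by rw [Nat.add_comm])

lemma vlam_self {n M : ℕ} (hn : n < q d M) (hM : zeta d n ≤ M) :
    vlam d p lam n
      = (∏ j ∈ Finset.Icc 1 (zeta d n - 1), iota d p lam j ^ (d j - 1))
        * iota d p lam (zeta d n) ^ digit d n (zeta d n)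
        * ∏ j ∈ Finset.Ioc (zeta d n) M, iota d p lam j ^ digit d n j := by
  set z := zeta d n with hz
  have hz1 : 1 ≤ z := by rw [hz]; exact zeta_pos hd0 hd n
  set g : ℕ → ℂ := fun j => iota d p lam j ^ digit d n j with hg
  have hIoc : Finset.Icc 1 M = Finset.Ioc 0 M := by
    ext x; simp only [Finset.mem_Icc, Finset.mem_Ioc]; omega
  have hIoc2 : Finset.Icc 1 (z-1) = Finset.Ioc 0 (z-1) := by
    ext x; simp only [Finset.mem_Icc, Finset.mem_Ioc]; omega
  have hsplitz : ∏ j ∈ Finset.Ioc 0 z, g j = (∏ j ∈ Finset.Ioc 0 (z-1), g j) * g z := by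
    have h := Finset.prod_Ioc_succ_top (Nat.zero_le (z-1)) g
    rw [show z - 1 + 1 = z by omega] at h
    exact h
  rw [vlam_eq_prod_Icc hd0 hd p lam hn, hIoc,
    ← Finset.prod_Ioc_consecutive g (Nat.zero_le z) hM, hsplitz, hIoc2]
  congr 1
  congr 1
  refine Finset.prod_congr rfl (fun j hj => ?_)
  simp only [Finset.mem_Ioc] at hj
  rw [hg]
  simp only
  rw [digit_of_lt_zeta hd0 hd (by omega) (by omega)]

lemma vlam_succ {n M : ℕ} (hn : n + 1 < q d M) (hM : zeta d n ≤ M) :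
    vlam d p lam (n+1)
      = iota d p lam (zeta d n) ^ (digit d n (zeta d n) + 1)
        * ∏ j ∈ Finset.Ioc (zeta d n) M, iota d p lam j ^ digit d n j := by
  set z := zeta d n with hz
  have hz1 : 1 ≤ z := by rw [hz]; exact zeta_pos hd0 hd n
  set g : ℕ → ℂ := fun j => iota d p lam j ^ digit d (n+1) j with hg
  have hIoc : Finset.Icc 1 M = Finset.Ioc 0 M := by
    ext x; simp only [Finset.mem_Icc, Finset.mem_Ioc]; omega
  have hsplitz : ∏ j ∈ Finset.Ioc 0 z, g j = (∏ j ∈ Finset.Ioc 0 (z-1), g j) * g z := by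
    have h := Finset.prod_Ioc_succ_top (Nat.zero_le (z-1)) g
    rw [show z - 1 + 1 = z by omega] at h
    exact h
  rw [vlam_eq_prod_Icc hd0 hd p lam hn, hIoc,
    ← Finset.prod_Ioc_consecutive g (Nat.zero_le z) hM, hsplitz]
  have e1 : ∏ j ∈ Finset.Ioc 0 (z-1), g j = 1 := by
    apply Finset.prod_eq_one
    intro j hj
    simp only [Finset.mem_Ioc] at hj
    show iota d p lam j ^ digit d (n+1) j = 1
    rw [digit_succ_low hd0 hd (by omega) (by omega), pow_zero]
  have e2 : g z = iota d p lam z ^ (digit d n z + 1) := by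
    show iota d p lam z ^ digit d (n+1) z = _
    rw [hz, digit_succ_zeta hd0 hd n]
  have e3 : ∏ j ∈ Finset.Ioc z M, g j
      = ∏ j ∈ Finset.Ioc z M, iota d p lam j ^ digit d n j := by
    refine Finset.prod_congr rfl (fun j hj => ?_)
    simp only [Finset.mem_Ioc] at hj
    show iota d p lam j ^ digit d (n+1) j = _
    rw [digit_succ_high hd0 hd (show zeta d n < j by omega)]
  rw [e1, e2, e3, one_mul]

lemma vlam_sub {n M r : ℕ} (hn : n < q d M) (hM : zeta d n ≤ M)
    (hr1 : 1 ≤ r) (hr2 : r + 1 ≤ zeta d n) :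
    vlam d p lam (n - (q d r - 1))
      = (∏ j ∈ Finset.Icc (r+1) (zeta d n - 1), iota d p lam j ^ (d j - 1))
        * iota d p lam (zeta d n) ^ digit d n (zeta d n)
        * ∏ j ∈ Finset.Ioc (zeta d n) M, iota d p lam j ^ digit d n j := by
  set z := zeta d n with hz
  have hz1 : 1 ≤ z := by rw [hz]; exact zeta_pos hd0 hd n
  have hsubn : n - (q d r - 1) < q d M := by
    have : n - (q d r - 1) ≤ n := Nat.sub_le _ _
    omega
  set g : ℕ → ℂ := fun j => iota d p lam j ^ digit d (n - (q d r - 1)) j with hg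
  have hIoc : Finset.Icc 1 M = Finset.Ioc 0 M := by
    ext x; simp only [Finset.mem_Icc, Finset.mem_Ioc]; omega
  have hsplitz : ∏ j ∈ Finset.Ioc 0 z, g j = (∏ j ∈ Finset.Ioc 0 (z-1), g j) * g z := by
    have h := Finset.prod_Ioc_succ_top (Nat.zero_le (z-1)) g
    rw [show z - 1 + 1 = z by omega] at h
    exact h
  rw [vlam_eq_prod_Icc hd0 hd p lam hsubn, hIoc,
    ← Finset.prod_Ioc_consecutive g (Nat.zero_le z) hM, hsplitz,
    ← Finset.prod_Ioc_consecutive g (Nat.zero_le r) (show r ≤ z - 1 by omega)]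
  have e0 : ∏ j ∈ Finset.Ioc 0 r, g j = 1 := by
    apply Finset.prod_eq_one
    intro j hj
    simp only [Finset.mem_Ioc] at hj
    show iota d p lam j ^ digit d (n - (q d r - 1)) j = 1
    rw [digit_sub_low hd0 hd hr1 hr2 (by omega) (by omega), pow_zero]
  have e1 : ∏ j ∈ Finset.Ioc r (z-1), g j
      = ∏ j ∈ Finset.Icc (r+1) (z-1), iota d p lam j ^ (d j - 1) := by
    have hIoc3 : Finset.Icc (r+1) (z-1) = Finset.Ioc r (z-1) := by
      ext x; simp only [Finset.mem_Icc, Finset.mem_Ioc]; omega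
    rw [hIoc3]
    refine Finset.prod_congr rfl (fun j hj => ?_)
    simp only [Finset.mem_Ioc] at hj
    show iota d p lam j ^ digit d (n - (q d r - 1)) j = _
    rw [digit_sub_high hd0 hd hr1 hr2 (by omega),
      digit_of_lt_zeta hd0 hd (by omega) (by omega)]
  have e2 : g z = iota d p lam z ^ digit d n z := by
    show iota d p lam z ^ digit d (n - (q d r - 1)) z = _
    rw [hz, digit_sub_high hd0 hd hr1 hr2 (by omega)]
  have e3 : ∏ j ∈ Finset.Ioc z M, g j
      = ∏ j ∈ Finset.Ioc z M, iota d p lam j ^ digit d n j := by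
    refine Finset.prod_congr rfl (fun j hj => ?_)
    simp only [Finset.mem_Ioc] at hj
    show iota d p lam j ^ digit d (n - (q d r - 1)) j = _
    rw [digit_sub_high hd0 hd hr1 hr2 (by omega)]
  rw [e0, e1, e2, e3, one_mul]

lemma vlam_zero : vlam d p lam 0 = 1 := by
  have h0 : (0:ℕ) < q d 1 := q_pos hd0 hd 1
  rw [vlam_eq_prod_Icc hd0 hd p lam h0]
  apply Finset.prod_eq_one
  intro j hj
  simp only [Finset.mem_Icc] at hj
  have : digit d 0 j = 0 := by simp [digit]
  rw [this, pow_zero]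

end vdecomp

lemma eigen_identity (p' ι : ℕ → ℂ) (e : ℕ → ℕ) (lam : ℂ) (he : ∀ j, 1 ≤ j → 1 ≤ e j)
    (hrec : ∀ r, 1 ≤ r → p' (r+1) * ι (r+1) + (1 - p' (r+1)) = ι r ^ e r)
    (hlam : p' 1 * ι 1 + (1 - p' 1) = lam) (z : ℕ) (hz : 1 ≤ z) :
    (∏ j ∈ Finset.Icc 1 z, p' j) * ι z
      + (1 - p' 1) * (∏ j ∈ Finset.Icc 1 (z-1), ι j ^ (e j - 1))
      + ∑ r ∈ Finset.Icc 1 (z-1), (1 - p' (r+1)) * (∏ j ∈ Finset.Icc 1 r, p' j)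
          * (∏ j ∈ Finset.Icc (r+1) (z-1), ι j ^ (e j - 1))
    = lam * ∏ j ∈ Finset.Icc 1 (z-1), ι j ^ (e j - 1) := by
  have h := tele_aux p' ι e he hrec z (z-1) 1 le_rfl (by omega)
  have h1 : ∏ j ∈ Finset.Icc 1 1, p' j = p' 1 := by simp
  calc (∏ j ∈ Finset.Icc 1 z, p' j) * ι z
      + (1 - p' 1) * (∏ j ∈ Finset.Icc 1 (z-1), ι j ^ (e j - 1))
      + ∑ r ∈ Finset.Icc 1 (z-1), (1 - p' (r+1)) * (∏ j ∈ Finset.Icc 1 r, p' j)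
          * (∏ j ∈ Finset.Icc (r+1) (z-1), ι j ^ (e j - 1))
      = ((∏ j ∈ Finset.Icc 1 z, p' j) * ι z
        + ∑ r ∈ Finset.Icc 1 (z-1), (1 - p' (r+1)) * (∏ j ∈ Finset.Icc 1 r, p' j)
          * (∏ j ∈ Finset.Icc (r+1) (z-1), ι j ^ (e j - 1)))
        + (1 - p' 1) * (∏ j ∈ Finset.Icc 1 (z-1), ι j ^ (e j - 1)) := by ring
    _ = (∏ j ∈ Finset.Icc 1 1, p' j) * ι 1 * (∏ j ∈ Finset.Icc 1 (z-1), ι j ^ (e j - 1))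
        + (1 - p' 1) * (∏ j ∈ Finset.Icc 1 (z-1), ι j ^ (e j - 1)) := by rw [h]
    _ = (p' 1 * ι 1 + (1 - p' 1)) * (∏ j ∈ Finset.Icc 1 (z-1), ι j ^ (e j - 1)) := by
        rw [h1]; ring
    _ = lam * ∏ j ∈ Finset.Icc 1 (z-1), ι j ^ (e j - 1) := by rw [hlam]




/-! ### iota recursion -/

section irec
variable {d : ℕ → ℕ} {p : ℕ → ℝ} (hd0 : d 0 = 1) (hd : ∀ j, 1 ≤ j → 2 ≤ d j)
  (hp : ∀ j, 1 ≤ j → p j ∈ Set.Ioc (0 : ℝ) 1) (lam : ℂ)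
include hp

lemma p_ne_zero {j : ℕ} (hj : 1 ≤ j) : (p j : ℂ) ≠ 0 := by
  have h := (hp j hj).1
  simp only [ne_eq, Complex.ofReal_eq_zero]
  exact ne_of_gt h

lemma iota_mul {r : ℕ} (hr : 1 ≤ r) :
    (p r : ℂ) * iota d p lam r + (1 - (p r : ℂ)) = ftil d p (r-1) lam := by
  have hpr : (p r : ℂ) ≠ 0 := p_ne_zero hp hr
  rw [iota]
  field_simp
  ring

lemma ftil_pow (k : ℕ) :
    ftil d p (k+1) lam = iota d p lam (k+1) ^ d (k+1) := rfl

lemma iota_rec {r : ℕ} (hr : 1 ≤ r) :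
    (p (r+1) : ℂ) * iota d p lam (r+1) + (1 - (p (r+1) : ℂ))
      = iota d p lam r ^ d r := by
  obtain ⟨k, rfl⟩ : ∃ k, r = k + 1 := ⟨r - 1, by omega⟩
  rw [iota_mul hp lam (by omega : 1 ≤ k+1+1)]
  simp only [Nat.add_sub_cancel]
  exact ftil_pow hp lam k

lemma iota_lam : (p 1 : ℂ) * iota d p lam 1 + (1 - (p 1 : ℂ)) = lam := by
  have h := iota_mul (d := d) hp lam (le_refl 1)
  simpa [ftil] using h

end irec

/-! ### tsum evaluation -/

section tsumeval
variable {d : ℕ → ℕ} (hd0 : d 0 = 1) (hd : ∀ j, 1 ≤ j → 2 ≤ d j) (p : ℕ → ℝ)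
include hd0 hd

lemma n_ge (n : ℕ) {r : ℕ} (hr1 : 1 ≤ r) (hr2 : r + 1 ≤ zeta d n) :
    q d r - 1 ≤ n := by
  have hmod : n % q d r = q d r - 1 :=
    mod_maxed hd0 hd (fun i hi1 hi2 => digit_of_lt_zeta hd0 hd hi1 (by omega))
  have := Nat.mod_le n (q d r)
  omega

lemma s_tsum_eq (w : ℕ → ℂ) (n : ℕ) :
    ∑' m : ℕ, (s d p n m : ℂ) * w m
      = (∏ j ∈ Finset.Icc 1 (zeta d n), (p j : ℂ)) * w (n+1)
        + (1 - (p 1 : ℂ)) * w n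
        + ∑ r ∈ Finset.Icc 1 (zeta d n - 1),
            (1 - (p (r+1) : ℂ)) * (∏ j ∈ Finset.Icc 1 r, (p j : ℂ))
              * w (n - (q d r - 1)) := by
  classical
  set z := zeta d n with hz
  have hz1 : 1 ≤ z := by rw [hz]; exact zeta_pos hd0 hd n
  set G : Finset ℕ := (Finset.Icc 1 (z-1)).image (fun r => n - (q d r - 1)) with hG
  set F : Finset ℕ := insert (n+1) (insert n G) with hF
  -- each image point is < n
  have himlt : ∀ m ∈ G, m < n := by
    intro m hm
    rw [hG] at hm
    obtain ⟨r, hr, rfl⟩ := Finset.mem_image.1 hm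
    simp only [Finset.mem_Icc] at hr
    have h1 := n_ge hd0 hd n hr.1 (by omega)
    have h2 : 2 ≤ q d r := by
      have := q_strictMono hd0 hd (show 0 < r by omega)
      have := q_zero hd0 hd
      omega
    omega
  -- vanishing outside F
  have hvan : ∀ m ∉ F, (s d p n m : ℂ) * w m = 0 := by
    intro m hm
    rw [hF] at hm
    simp only [Finset.mem_insert] at hm
    push_neg at hm
    obtain ⟨h1, h2, h3⟩ := hm
    have hs : s d p n m = 0 := by
      rw [s, if_neg h1, if_neg h2]
      rw [dif_neg]
      intro hcon
      obtain ⟨r, hr1, hr2, hr3⟩ := hcon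
      rw [sum_geom hd0 hd r] at hr3
      apply h3
      rw [hG]
      apply Finset.mem_image.2
      refine ⟨r, Finset.mem_Icc.2 ⟨hr1, by omega⟩, ?_⟩
      have := q_pos hd0 hd r
      omega
    rw [hs]
    simp
  rw [tsum_eq_sum (f := fun m => (s d p n m : ℂ) * w m) (s := F) hvan]
  -- membership facts
  have hn1G : n + 1 ∉ insert n G := by
    simp only [Finset.mem_insert]
    push_neg
    exact ⟨by omega, fun hmem => by have := himlt _ hmem; omega⟩
  have hnG : n ∉ G := fun hmem => by have := himlt _ hmem; omega
  rw [hF, Finset.sum_insert hn1G, Finset.sum_insert hnG]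
  -- value at n+1
  have hv1 : s d p n (n+1) = ∏ j ∈ Finset.Icc 1 z, p j := by
    rw [s, if_pos rfl]
  -- value at n
  have hv2 : s d p n n = 1 - p 1 := by
    rw [s, if_neg (by omega), if_pos rfl]
  -- sum over image
  have hinj : ∀ x ∈ Finset.Icc 1 (z-1), ∀ y ∈ Finset.Icc 1 (z-1),
      n - (q d x - 1) = n - (q d y - 1) → x = y := by
    intro x hx y hy hxy
    simp only [Finset.mem_Icc] at hx hy
    have h1 := n_ge hd0 hd n hx.1 (by omega)
    have h2 := n_ge hd0 hd n hy.1 (by omega)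
    have h3 := q_pos hd0 hd x
    have h4 := q_pos hd0 hd y
    have : q d x = q d y := by omega
    exact (q_strictMono hd0 hd).injective this
  rw [hG, Finset.sum_image hinj]
  -- values on image points
  have hv3 : ∀ r ∈ Finset.Icc 1 (z-1),
      (s d p n (n - (q d r - 1)) : ℂ) * w (n - (q d r - 1))
        = (1 - (p (r+1) : ℂ)) * (∏ j ∈ Finset.Icc 1 r, (p j : ℂ))
            * w (n - (q d r - 1)) := by
    intro r hr
    simp only [Finset.mem_Icc] at hr
    have hrn := n_ge hd0 hd n hr.1 (by omega)
    have hq2 : 2 ≤ q d r := by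
      have := q_strictMono hd0 hd (show 0 < r by omega)
      have := q_zero hd0 hd
      omega
    set m := n - (q d r - 1) with hm
    have hmn : m < n := by omega
    have hex : ∃ r', 1 ≤ r' ∧ r' + 1 ≤ zeta d n ∧
        n = m + ∑ j ∈ Finset.Icc 1 r', (d j - 1) * q d (j - 1) := by
      refine ⟨r, hr.1, by omega, ?_⟩
      rw [sum_geom hd0 hd r]
      omega
    have hs : s d p n m = (1 - p (hex.choose + 1)) * ∏ j ∈ Finset.Icc 1 hex.choose, p j := by
      rw [s, if_neg (by omega), if_neg (by omega), dif_pos hex]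
    have hchoose : hex.choose = r := by
      obtain ⟨hc1, hc2, hc3⟩ := hex.choose_spec
      rw [sum_geom hd0 hd] at hc3
      have h3 := q_pos hd0 hd hex.choose
      have : q d hex.choose = q d r := by omega
      exact (q_strictMono hd0 hd).injective this
    rw [hchoose] at hs
    rw [hs]
    push_cast
    ring
  rw [Finset.sum_congr rfl hv3, hv1, hv2]
  push_cast
  ring

end tsumeval

/-! ### the pointwise eigen equation -/

lemma eigen_pointwise {d : ℕ → ℕ} {p : ℕ → ℝ}
    (hd0 : d 0 = 1) (hd : ∀ j, 1 ≤ j → 2 ≤ d j)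
    (hp : ∀ j, 1 ≤ j → p j ∈ Set.Ioc (0 : ℝ) 1) (lam : ℂ) (n : ℕ) :
    ∑' m : ℕ, (s d p n m : ℂ) * vlam d p lam m = lam * vlam d p lam n := by
  classical
  set z := zeta d n with hz
  have hz1 : 1 ≤ z := by rw [hz]; exact zeta_pos hd0 hd n
  set M := max z (n+1) with hM
  have hnM : n + 1 < q d M := by
    have h1 : n + 1 < q d (n+1) := lt_q_self hd0 hd (n+1)
    have h2 : q d (n+1) ≤ q d M := (q_strictMono hd0 hd).monotone (by omega)
    omega
  have hnM' : n < q d M := by omega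
  have hzM : z ≤ M := by omega
  set I : ℕ → ℂ := fun j => iota d p lam j with hI
  set A := digit d n z with hA
  set R := ∏ j ∈ Finset.Ioc z M, I j ^ digit d n j with hR
  rw [s_tsum_eq hd0 hd p (vlam d p lam) n]
  rw [vlam_succ hd0 hd p lam hnM hzM, vlam_self hd0 hd p lam hnM' hzM]
  have hsum : ∑ r ∈ Finset.Icc 1 (z - 1),
      (1 - (p (r+1) : ℂ)) * (∏ j ∈ Finset.Icc 1 r, (p j : ℂ))
        * vlam d p lam (n - (q d r - 1))
      = ∑ r ∈ Finset.Icc 1 (z - 1),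
          (1 - (p (r+1) : ℂ)) * (∏ j ∈ Finset.Icc 1 r, (p j : ℂ))
            * ((∏ j ∈ Finset.Icc (r+1) (z-1), I j ^ (d j - 1)) * I z ^ A * R) := by
    refine Finset.sum_congr rfl (fun r hr => ?_)
    simp only [Finset.mem_Icc] at hr
    rw [vlam_sub hd0 hd p lam hnM' hzM hr.1 (by omega)]
  rw [hsum]
  have key := eigen_identity (fun j => (p j : ℂ)) I d lam
    (fun j hj => by have := hd j hj; omega)
    (fun r hr => iota_rec hp lam hr) (iota_lam hp lam) z hz1
  calc (∏ j ∈ Finset.Icc 1 z, (p j : ℂ)) * (I z ^ (A + 1) * R)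
        + (1 - (p 1 : ℂ)) * ((∏ j ∈ Finset.Icc 1 (z-1), I j ^ (d j - 1)) * I z ^ A * R)
        + ∑ r ∈ Finset.Icc 1 (z - 1),
            (1 - (p (r+1) : ℂ)) * (∏ j ∈ Finset.Icc 1 r, (p j : ℂ))
              * ((∏ j ∈ Finset.Icc (r+1) (z-1), I j ^ (d j - 1)) * I z ^ A * R)
      = ((∏ j ∈ Finset.Icc 1 z, (p j : ℂ)) * I z
          + (1 - (p 1 : ℂ)) * (∏ j ∈ Finset.Icc 1 (z-1), I j ^ (d j - 1))
          + ∑ r ∈ Finset.Icc 1 (z - 1),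
              (1 - (p (r+1) : ℂ)) * (∏ j ∈ Finset.Icc 1 r, (p j : ℂ))
                * (∏ j ∈ Finset.Icc (r+1) (z-1), I j ^ (d j - 1)))
          * (I z ^ A * R) := by
        rw [add_mul, add_mul, Finset.sum_mul]
        congr 1
        · congr 1
          · ring
          · ring
        · refine Finset.sum_congr rfl (fun r hr => ?_)
          ring
    _ = lam * (∏ j ∈ Finset.Icc 1 (z-1), I j ^ (d j - 1)) * (I z ^ A * R) := by
          rw [key]
    _ = lam * ((∏ j ∈ Finset.Icc 1 (z-1), I j ^ (d j - 1)) * I z ^ A * R) := by ring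


/-! ### analysis: norm bounds -/

section analysis
variable {d : ℕ → ℕ} {p : ℕ → ℝ}
  (hd0 : d 0 = 1) (hd : ∀ j, 1 ≤ j → 2 ≤ d j)
  (hp : ∀ j, 1 ≤ j → p j ∈ Set.Ioc (0 : ℝ) 1) (lam : ℂ)

lemma r0_facts : 0 < Real.sqrt 2 - 1 ∧ Real.sqrt 2 - 1 < 1/2 ∧
    ((Real.sqrt 2 - 1)^2 + 1 = 2*(Real.sqrt 2 - 1)*(1 + (Real.sqrt 2 - 1))) := by
  have h1 : Real.sqrt 2 ^ 2 = 2 := Real.sq_sqrt (by norm_num)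
  have h2 : 0 ≤ Real.sqrt 2 := Real.sqrt_nonneg 2
  refine ⟨by nlinarith, by nlinarith, by nlinarith⟩

include hd hp in
lemma iota_norm_rec {j : ℕ} (hj : 1 ≤ j) :
    p (j+1) * ‖iota d p lam (j+1)‖ ≤ ‖iota d p lam j‖ ^ d j + (1 - p (j+1)) := by
  have h := iota_rec (d := d) hp lam hj
  have heq : (p (j+1) : ℂ) * iota d p lam (j+1)
      = iota d p lam j ^ d j - (1 - (p (j+1) : ℂ)) := by
    linear_combination h
  have hnorm := congrArg Norm.norm heq
  rw [norm_mul, Complex.norm_real] at hnorm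
  have hple := (hp (j+1) (by omega)).2
  have hppos := (hp (j+1) (by omega)).1
  have habs : |p (j+1)| = p (j+1) := abs_of_pos hppos
  have htri : ‖iota d p lam j ^ d j - (1 - (p (j+1) : ℂ))‖
      ≤ ‖iota d p lam j ^ d j‖ + ‖(1 - (p (j+1) : ℂ))‖ := norm_sub_le _ _
  have hc : ‖(1 - (p (j+1) : ℂ))‖ = 1 - p (j+1) := by
    have : (1 - (p (j+1) : ℂ)) = (((1 - p (j+1) : ℝ)) : ℂ) := by push_cast; ring
    rw [this, Complex.norm_real, Real.norm_eq_abs, abs_of_nonneg (by linarith)]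
  rw [Real.norm_eq_abs, habs] at hnorm
  rw [hnorm]
  calc ‖iota d p lam j ^ d j - (1 - (p (j+1) : ℂ))‖
      ≤ ‖iota d p lam j ^ d j‖ + ‖(1 - (p (j+1) : ℂ))‖ := norm_sub_le _ _
    _ = ‖iota d p lam j‖ ^ d j + (1 - p (j+1)) := by rw [norm_pow, hc]

include hd hp in
lemma iota_small {j0 : ℕ} (hj0 : 1 ≤ j0)
    (hpj : ∀ k, j0 ≤ k → 2*(Real.sqrt 2 - 1) ≤ p k)
    (hstart : ‖iota d p lam j0‖ < Real.sqrt 2 - 1) :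
    ∀ k, j0 ≤ k → ‖iota d p lam k‖ < Real.sqrt 2 - 1 := by
  obtain ⟨hr0, hrhalf, hrid⟩ := r0_facts
  set r0 := Real.sqrt 2 - 1 with hr
  have main : ∀ m, ‖iota d p lam (j0 + m)‖ < r0 := by
    intro m
    induction m with
    | zero => simpa using hstart
    | succ k ih =>
        set x := ‖iota d p lam (j0 + k)‖ with hx
        have hxnn : 0 ≤ x := norm_nonneg _
        have hrec := iota_norm_rec hd hp lam (show 1 ≤ j0 + k by omega)
        have hd2 : 2 ≤ d (j0 + k) := hd _ (by omega)
        have hxd : x ^ d (j0+k) ≤ x ^ 2 :=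
          pow_le_pow_of_le_one hxnn (by linarith) hd2
        have hx2 : x ^ 2 < r0 ^ 2 := by
          apply pow_lt_pow_left₀ ih hxnn
          omega
        have hp' := hpj (j0+k+1) (by omega)
        have hp'pos := (hp (j0+k+1) (by omega)).1
        have hp'le := (hp (j0+k+1) (by omega)).2
        have key : p (j0+k+1) * ‖iota d p lam (j0+k+1)‖ < p (j0+k+1) * r0 := by
          calc p (j0+k+1) * ‖iota d p lam (j0+k+1)‖
              ≤ x ^ d (j0+k) + (1 - p (j0+k+1)) := hrec
            _ ≤ x^2 + (1 - p (j0+k+1)) := by linarith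
            _ < r0^2 + (1 - p (j0+k+1)) := by linarith
            _ ≤ p (j0+k+1) * r0 := by nlinarith
        exact lt_of_mul_lt_mul_left key hp'pos.le
  intro k hk
  have : k = j0 + (k - j0) := by omega
  rw [this]
  exact main _

include hd hp in
lemma iota_to_zero {j0 : ℕ} (hj0 : 1 ≤ j0)
    (hp1 : Filter.Tendsto (fun j => p j) Filter.atTop (nhds (1 : ℝ)))
    (hpj : ∀ k, j0 ≤ k → 2*(Real.sqrt 2 - 1) ≤ p k)
    (hstart : ‖iota d p lam j0‖ < Real.sqrt 2 - 1) :
    Filter.Tendsto (fun j => ‖iota d p lam j‖) Filter.atTop (nhds 0) := by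
  obtain ⟨hr0, hrhalf, hrid⟩ := r0_facts
  set r0 := Real.sqrt 2 - 1 with hr
  have hsmall := iota_small hd hp lam hj0 hpj hstart
  rw [Metric.tendsto_atTop]
  intro ε hε
  set ε1 := ε / 2 with hε1
  have hε1pos : 0 < ε1 := by positivity
  -- choose J
  have hev : ∀ᶠ j in Filter.atTop, p j > 1 - min (1/2) (ε1/4) := by
    apply hp1.eventually_const_lt
    have : 0 < min (1/2) (ε1/4) := by positivity
    linarith
  obtain ⟨J1, hJ1⟩ := Filter.eventually_atTop.1 hev
  set J := max J1 j0 with hJ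
  have hJj0 : j0 ≤ J := le_max_right _ _
  have hJcond : ∀ j, J ≤ j → p j ≥ 1/2 ∧ 1 - p j ≤ ε1/4 := by
    intro j hj
    have h := hJ1 j (le_trans (le_max_left _ _) hj)
    constructor
    · have := min_le_left (1/2 : ℝ) (ε1/4); linarith
    · have := min_le_right (1/2 : ℝ) (ε1/4); linarith
  -- inductive decay
  have main : ∀ k, ‖iota d p lam (J + k)‖ < r0 / 2^k + ε1 := by
    intro k
    induction k with
    | zero =>
        have h := hsmall J hJj0
        have h0 : ‖iota d p lam (J+0)‖ < r0 := by simpa using h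
        have h20 : r0/2^(0:ℕ) = r0 := by norm_num
        linarith
    | succ k ih =>
        set x := ‖iota d p lam (J + k)‖ with hx
        set y := ‖iota d p lam (J + k + 1)‖ with hy
        have hxnn : 0 ≤ x := norm_nonneg _
        have hynn : 0 ≤ y := norm_nonneg _
        have hxr0 : x < r0 := hsmall _ (by omega)
        have hrec := iota_norm_rec hd hp lam (show 1 ≤ J + k by omega)
        have hd2 : 2 ≤ d (J + k) := hd _ (by omega)
        have hxd : x ^ d (J+k) ≤ x ^ 2 :=
          pow_le_pow_of_le_one hxnn (by linarith) hd2
        have hx2 : x^2 ≤ r0 * x := by nlinarith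
        have hpj' := hpj (J+k+1) (by omega)
        have ⟨hphalf, hpeps⟩ := hJcond (J+k+1) (by omega)
        have hp'pos := (hp (J+k+1) (by omega)).1
        have hp'le := (hp (J+k+1) (by omega)).2
        have e1 : y ≤ x/2 + 2*(1 - p (J+k+1)) := by
          nlinarith [hrec, mul_nonneg (sub_nonneg.2 (show 2*r0 ≤ p (J+k+1) from hpj')) hxnn,
            mul_nonneg (sub_nonneg.2 (show 1/2 ≤ p (J+k+1) from hphalf))
              (sub_nonneg.2 hp'le)]
        have ht : (0:ℝ) < 2^k := by positivity
        have hdiv : (r0/2^k + ε1)/2 = r0/2^(k+1) + ε1/2 := by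
          rw [pow_succ]
          field_simp
        have : y < (r0/2^k + ε1)/2 + ε1/2 := by
          have hx' : x/2 < (r0/2^k + ε1)/2 := by linarith
          linarith
        rw [hdiv] at this
        have : y < r0/2^(k+1) + ε1 := by linarith
        rwa [show J + (k+1) = J + k + 1 by omega]
  -- choose k0
  obtain ⟨k0, hk0⟩ := exists_pow_lt_of_lt_one hε1pos (by norm_num : (1/2:ℝ) < 1)
  refine ⟨J + k0, fun j hj => ?_⟩
  have hjJ : j = J + (j - J) := by omega
  have hkk : k0 ≤ j - J := by omega
  have h1 := main (j - J)
  have h2 : r0 / 2^(j-J) ≤ (1/2:ℝ)^(j-J) := by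
    rw [div_eq_mul_inv, ← inv_pow, show ((2:ℝ))⁻¹ = 1/2 by norm_num]
    have : (0:ℝ) ≤ (1/2:ℝ)^(j-J) := by positivity
    nlinarith
  have h3 : ((1:ℝ)/2)^(j-J) ≤ (1/2:ℝ)^k0 :=
    pow_le_pow_of_le_one (by norm_num) (by norm_num) hkk
  rw [← hjJ] at h1
  rw [Real.dist_eq, sub_zero, abs_of_nonneg (norm_nonneg _)]
  calc ‖iota d p lam j‖ < r0/2^(j-J) + ε1 := h1
    _ ≤ (1/2:ℝ)^k0 + ε1 := by linarith
    _ < ε1 + ε1 := by linarith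
    _ = ε := by rw [hε1]; ring

end analysis


section decay
variable {d : ℕ → ℕ} {p : ℕ → ℝ}
  (hd0 : d 0 = 1) (hd : ∀ j, 1 ≤ j → 2 ≤ d j)
  (hp : ∀ j, 1 ≤ j → p j ∈ Set.Ioc (0 : ℝ) 1) (lam : ℂ)
include hd0 hd hp

lemma vlam_to_zero {j0 : ℕ} (hj0 : 1 ≤ j0)
    (hp1 : Filter.Tendsto (fun j => p j) Filter.atTop (nhds (1 : ℝ)))
    (hpj : ∀ k, j0 ≤ k → 2*(Real.sqrt 2 - 1) ≤ p k)
    (hstart : ‖iota d p lam j0‖ < Real.sqrt 2 - 1) :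
    Filter.Tendsto (vlam d p lam) Filter.atTop (nhds (0:ℂ)) := by
  obtain ⟨hr0, hrhalf, hrid⟩ := r0_facts
  have hsmall := iota_small hd hp lam hj0 hpj hstart
  have hizero := iota_to_zero hd hp lam hj0 hp1 hpj hstart
  rw [Metric.tendsto_atTop]
  intro ε hε
  set C := ∏ j ∈ Finset.Icc 1 j0, max 1 (‖iota d p lam j‖ ^ d j) with hC
  have hC1 : (1:ℝ) ≤ C := by
    have h := Finset.prod_le_prod (s := Finset.Icc 1 j0) (f := fun _ => (1:ℝ))
        (g := fun j => max 1 (‖iota d p lam j‖ ^ d j))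
        (fun _ _ => by norm_num) (fun j _ => le_max_left _ _)
    simpa using h
  have hCpos : (0:ℝ) < C := by linarith
  have hεC : 0 < ε / C := by positivity
  obtain ⟨J1, hJ1⟩ := (Metric.tendsto_atTop.1 hizero) (ε/C) hεC
  set J' := max J1 (j0+1) with hJ'
  have hJ'cond : ∀ j, J' ≤ j → ‖iota d p lam j‖ < ε/C := by
    intro j hj
    have := hJ1 j (le_trans (le_max_left _ _) hj)
    rw [Real.dist_eq, sub_zero, abs_of_nonneg (norm_nonneg _)] at this
    exact this
  refine ⟨q d J', fun n hn => ?_⟩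
  obtain ⟨js, hjs1, hjs2⟩ := exists_top_digit hd0 hd (show q d J' ≤ n from hn)
  -- js ≤ n
  have hq1 : q d (js - 1) ≤ n := by
    by_contra hcon
    exact hjs2 (digit_eq_zero_of_lt hd0 hd (by omega) (by omega))
  have hjsn : js ≤ n := by
    have h1 : n < q d n := lt_q_self hd0 hd n
    have : js - 1 < n := by
      by_contra hcon
      have : q d n ≤ q d (js - 1) := (q_strictMono hd0 hd).monotone (by omega)
      omega
    omega
  set M := n + j0 + 1 with hM
  have hnM : n < q d M := by
    have := lt_q_self hd0 hd M
    omega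
  have hjsM : js ≤ M := by omega
  have hj0M : j0 ≤ M := by omega
  rw [dist_zero_right, vlam_eq_prod_Icc hd0 hd p lam hnM, norm_prod]
  simp only [norm_pow]
  -- split the product
  have hIoc1 : Finset.Icc 1 M = Finset.Ioc 0 M := by
    ext x; simp only [Finset.mem_Icc, Finset.mem_Ioc]; omega
  have hIoc2 : Finset.Icc 1 j0 = Finset.Ioc 0 j0 := by
    ext x; simp only [Finset.mem_Icc, Finset.mem_Ioc]; omega
  rw [hIoc1, ← Finset.prod_Ioc_consecutive _ (Nat.zero_le j0) hj0M, ← hIoc2]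
  set B1 := ∏ j ∈ Finset.Icc 1 j0, ‖iota d p lam j‖ ^ digit d n j with hB1
  set B2 := ∏ j ∈ Finset.Ioc j0 M, ‖iota d p lam j‖ ^ digit d n j with hB2
  have hB1nn : 0 ≤ B1 := Finset.prod_nonneg (fun j _ => by positivity)
  have hB2nn : 0 ≤ B2 := Finset.prod_nonneg (fun j _ => by positivity)
  have hbound1 : B1 ≤ C := by
    apply Finset.prod_le_prod (fun j _ => by positivity)
    intro j hj
    simp only [Finset.mem_Icc] at hj
    rcases le_or_gt (‖iota d p lam j‖) 1 with hle | hgt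
    · exact le_trans (pow_le_one₀ (norm_nonneg _) hle) (le_max_left _ _)
    · refine le_trans ?_ (le_max_right _ _)
      apply pow_le_pow_right₀ hgt.le
      have := digit_lt hd0 hd n j hj.1
      omega
  have hfac : ∀ j ∈ Finset.Ioc j0 M, ‖iota d p lam j‖ ^ digit d n j ≤ 1 := by
    intro j hj
    simp only [Finset.mem_Ioc] at hj
    have := hsmall j (by omega)
    exact pow_le_one₀ (norm_nonneg _) (by linarith)
  have hjmem : js ∈ Finset.Ioc j0 M := by
    simp only [Finset.mem_Ioc]
    constructor
    · have : j0 + 1 ≤ J' := le_max_right _ _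
      omega
    · exact hjsM
  have hbound2 : B2 ≤ ‖iota d p lam js‖ ^ digit d n js := by
    rw [hB2, ← Finset.prod_erase_mul _ _ hjmem]
    have h1 : ∏ j ∈ (Finset.Ioc j0 M).erase js, ‖iota d p lam j‖ ^ digit d n j ≤ 1 :=
      Finset.prod_le_one (fun j _ => by positivity)
        (fun j hj => hfac j (Finset.mem_of_mem_erase hj))
    calc (∏ j ∈ (Finset.Ioc j0 M).erase js, ‖iota d p lam j‖ ^ digit d n j)
          * ‖iota d p lam js‖ ^ digit d n js
        ≤ 1 * ‖iota d p lam js‖ ^ digit d n js := by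
          apply mul_le_mul_of_nonneg_right h1 (by positivity)
      _ = ‖iota d p lam js‖ ^ digit d n js := one_mul _
  have hjsJ' : J' ≤ js := by omega
  have hjs_small : ‖iota d p lam js‖ < ε / C := hJ'cond js hjsJ'
  have hjslt1 : ‖iota d p lam js‖ ≤ 1 := by
    have := hsmall js (by
      have : j0 + 1 ≤ J' := le_max_right _ _
      omega)
    linarith
  have hbound3 : ‖iota d p lam js‖ ^ digit d n js ≤ ‖iota d p lam js‖ := by
    have h := pow_le_pow_of_le_one (norm_nonneg _) hjslt1
      (show 1 ≤ digit d n js by omega)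
    simpa using h
  calc B1 * B2 ≤ C * B2 := mul_le_mul_of_nonneg_right hbound1 hB2nn
    _ ≤ C * ‖iota d p lam js‖ := by
        apply mul_le_mul_of_nonneg_left (le_trans hbound2 hbound3) hCpos.le
    _ < C * (ε / C) := by
        apply mul_lt_mul_of_pos_left hjs_small hCpos
    _ = ε := by field_simp

end decay


/-! ### continuity and surjectivity of ftil -/

section ctssurj
variable {d : ℕ → ℕ} {p : ℕ → ℝ}

lemma ftil_continuous (j : ℕ) : Continuous (ftil d p j) := by
  induction j with
  | zero => exact continuous_id
  | succ k ih =>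
      show Continuous (f d p (k+1) ∘ ftil d p k)
      refine Continuous.comp ?_ ih
      unfold f
      exact ((continuous_id.sub continuous_const).div_const _).pow _

lemma iota_continuous (j : ℕ) : Continuous (fun lam => iota d p lam j) := by
  unfold iota
  exact ((ftil_continuous _).sub continuous_const).div_const _

lemma ftil_surjective (hd : ∀ j, 1 ≤ j → 2 ≤ d j)
    (hp : ∀ j, 1 ≤ j → p j ∈ Set.Ioc (0 : ℝ) 1) (j : ℕ) :
    Function.Surjective (ftil d p j) := by
  induction j with
  | zero => exact Function.surjective_id
  | succ k ih =>
      show Function.Surjective (f d p (k+1) ∘ ftil d p k)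
      refine Function.Surjective.comp ?_ ih
      intro w
      obtain ⟨u, hu⟩ := IsAlgClosed.exists_pow_nat_eq w
        (show 0 < d (k+1) by have := hd (k+1) (by omega); omega)
      refine ⟨(p (k+1) : ℂ) * u + (1 - (p (k+1) : ℂ)), ?_⟩
      have hp0 : (p (k+1) : ℂ) ≠ 0 := p_ne_zero hp (by omega)
      unfold f
      rw [← hu]
      congr 1
      field_simp
      ring

end ctssurj


/-- if `p_j → 1`, there are `r > 0` and `j₀ ≥ 1` such that for every
`j ≥ j₀`, every `λ` with `|ι_λ(j)| < r` is an eigenvalue of `S` on `c₀`; in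
particular the point spectrum of `S` on `c₀` has nonempty interior. -/
theorem stmt12 (d : ℕ → ℕ) (p : ℕ → ℝ)
    (hd0 : d 0 = 1) (hd : ∀ j, 1 ≤ j → 2 ≤ d j)
    (hp : ∀ j, 1 ≤ j → p j ∈ Set.Ioc (0 : ℝ) 1)
    (hp1 : Filter.Tendsto (fun j => p j) Filter.atTop (nhds (1 : ℝ)))
    (T0 : C₀(ℕ, ℂ) →L[ℂ] C₀(ℕ, ℂ))
    (hT0 : ∀ (w : C₀(ℕ, ℂ)) (n : ℕ), T0 w n = ∑' m : ℕ, (s d p n m : ℂ) * w m) :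
    (∃ r : ℝ, 0 < r ∧ ∃ j0 : ℕ, 1 ≤ j0 ∧ ∀ j, j0 ≤ j →
        ∀ lam : ℂ, ‖iota d p lam j‖ < r → lam ∈ pointSpectrum T0) ∧
      (interior (pointSpectrum T0)).Nonempty := by
  obtain ⟨hr0, hrhalf, hrid⟩ := r0_facts
  set r0 := Real.sqrt 2 - 1 with hr
  have h2r0 : 2 * r0 < 1 := by linarith
  obtain ⟨j1, hj1⟩ := Filter.eventually_atTop.1 (hp1.eventually_const_lt h2r0)
  set j0 := max j1 1 with hj0
  have hj01 : 1 ≤ j0 := le_max_right _ _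
  have hpj0 : ∀ k, j0 ≤ k → 2 * r0 ≤ p k := by
    intro k hk
    exact (hj1 k (le_trans (le_max_left _ _) hk)).le
  -- main eigenvalue claim
  have hmain : ∀ j, j0 ≤ j → ∀ lam : ℂ, ‖iota d p lam j‖ < r0 →
      lam ∈ pointSpectrum T0 := by
    intro j hj lam hlam
    have hj1' : 1 ≤ j := le_trans hj01 hj
    have hpj' : ∀ k, j ≤ k → 2 * r0 ≤ p k := fun k hk => hpj0 k (le_trans hj hk)
    have htend := vlam_to_zero hd0 hd hp lam hj1' hp1 hpj' hlam
    let v : C₀(ℕ, ℂ) :=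
      ⟨⟨vlam d p lam, continuous_of_discreteTopology⟩, by
        rw [Filter.cocompact_eq_cofinite, Nat.cofinite_eq_atTop]; exact htend⟩
    have hvne : v ≠ 0 := by
      intro hcon
      have h0 : v 0 = 0 := by rw [hcon]; rfl
      have h1 : v 0 = 1 := vlam_zero hd0 hd p lam
      rw [h1] at h0
      exact one_ne_zero h0
    have hTv : T0 v = lam • v := by
      apply DFunLike.ext
      intro n
      rw [hT0 v n]
      have he := eigen_pointwise hd0 hd hp lam n
      have hcv : ∀ m, v m = vlam d p lam m := fun m => rfl
      calc ∑' m : ℕ, (s d p n m : ℂ) * v m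
          = ∑' m : ℕ, (s d p n m : ℂ) * vlam d p lam m := rfl
        _ = lam * vlam d p lam n := he
        _ = (lam • v) n := by
            rw [ZeroAtInftyContinuousMap.coe_smul]
            simp [hcv]
    exact ⟨v, hvne, hTv⟩
  refine ⟨⟨r0, hr0, j0, hj01, hmain⟩, ?_⟩
  -- interior nonempty
  set U : Set ℂ := {lam | ‖iota d p lam j0‖ < r0} with hU
  have hUopen : IsOpen U := by
    have hc : Continuous (fun lam : ℂ => ‖iota d p lam j0‖) :=
      (iota_continuous j0).norm
    exact isOpen_lt hc continuous_const
  obtain ⟨lam0, hl0⟩ := ftil_surjective hd hp (j0 - 1) (1 - (p j0 : ℂ))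
  have hlam0 : lam0 ∈ U := by
    rw [hU]
    show ‖iota d p lam0 j0‖ < r0
    rw [iota, hl0, sub_self, zero_div, norm_zero]
    exact hr0
  have hUsub : U ⊆ pointSpectrum T0 := fun lam hl => hmain j0 le_rfl lam hl
  exact ⟨lam0, interior_maximal hUsub hUopen hlam0⟩


end AMFC
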